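/- The map Λ : Symₙ(ℝ) → ℝⁿ sending a real symmetric n×n matrix to the vector of its eigenvalues listed in increasing order is globally Lipschitz continuous (with respect to the Frobenius norm on matrices and the Euclidean norm on ℝⁿ). -/

import Mathlib

open Finset Submodule Module

open scoped RealInnerProductSpace

noncomputable section EigLip

variable {n : ℕ}

local notation "E" => EuclideanSpace ℝ (Fin n)

private lemma inner_eq_zero_of_mem_span (b : OrthonormalBasis (Fin n) ℝ E) {S : Set (Fin n)}
    {x : E} (hx : x ∈ Submodule.span ℝ (b '' S)) {j : Fin n} (hj : j ∉ S) :
    ⟪b j, x⟫ = 0 := by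
  induction hx using Submodule.span_induction with
  | mem y hy =>
    obtain ⟨i, hi, rfl⟩ := hy
    exact b.orthonormal.2 (fun h => hj (h ▸ hi))
  | zero => simp
  | add y z _ _ hy hz => rw [inner_add_right, hy, hz, add_zero]
  | smul a y _ hy => rw [inner_smul_right, hy, mul_zero]

private lemma sum_inner_sq (b : OrthonormalBasis (Fin n) ℝ E) (x : E) :
    ∑ j, ⟪b j, x⟫ ^ 2 = ‖x‖ ^ 2 := by
  have h := b.sum_repr' x
  calc ∑ j, ⟪b j, x⟫ ^ 2 = ⟪∑ j, ⟪b j, x⟫ • b j, x⟫ := by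
        rw [sum_inner]
        exact Finset.sum_congr rfl fun j _ => by rw [real_inner_smul_left]; ring
    _ = ‖x‖ ^ 2 := by rw [h, real_inner_self_eq_norm_sq]

private lemma inner_map_eq (b : OrthonormalBasis (Fin n) ℝ E) (T : E →ₗ[ℝ] E) (μ : Fin n → ℝ)
    (hb : ∀ j, T (b j) = μ j • b j) (x : E) :
    ⟪x, T x⟫ = ∑ j, μ j * ⟪b j, x⟫ ^ 2 := by
  have hTx : T x = ∑ j, (μ j * ⟪b j, x⟫) • b j := by
    conv_lhs => rw [← b.sum_repr' x]
    rw [map_sum]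
    exact Finset.sum_congr rfl fun j _ => by rw [map_smul, hb j, smul_smul, mul_comm]
  rw [hTx, inner_sum]
  refine Finset.sum_congr rfl fun j _ => ?_
  rw [inner_smul_right, real_inner_comm]
  ring

private lemma finrank_span_image (b : OrthonormalBasis (Fin n) ℝ E) (S : Finset (Fin n)) :
    finrank ℝ (Submodule.span ℝ (b '' ↑S)) = S.card := by
  have hli : LinearIndependent ℝ (fun j : {x // x ∈ S} => b j.1) :=
    b.orthonormal.linearIndependent.comp Subtype.val Subtype.val_injective
  have hrange : Set.range (fun j : {x // x ∈ S} => b j.1) = b '' ↑S := by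
    ext y; simp [Set.range, Set.mem_image]
  rw [← hrange, finrank_span_eq_card hli, Fintype.card_coe]

/-- Weyl's inequality, abstract form. -/
private lemma weyl (T₁ T₂ : E →ₗ[ℝ] E) (b c : OrthonormalBasis (Fin n) ℝ E)
    (μ ν : Fin n → ℝ) (hμ : Monotone μ) (hν : Monotone ν)
    (hb : ∀ j, T₁ (b j) = μ j • b j) (hc : ∀ j, T₂ (c j) = ν j • c j)
    (C : ℝ) (hC : ∀ x : E, ⟪x, T₁ x - T₂ x⟫ ≤ C * ‖x‖ ^ 2) (k : Fin n) :
    μ k ≤ ν k + C := by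
  set U : Submodule ℝ E := Submodule.span ℝ (b '' ↑(Finset.Ici k))
  set V : Submodule ℝ E := Submodule.span ℝ (c '' ↑(Finset.Iic k))
  have hU : finrank ℝ U = n - k := by rw [finrank_span_image, Fin.card_Ici]
  have hV : finrank ℝ V = k + 1 := by rw [finrank_span_image, Fin.card_Iic]
  have hdim : 0 < finrank ℝ (U ⊓ V : Submodule ℝ E) := by
    by_contra h
    have h0 : finrank ℝ (U ⊓ V : Submodule ℝ E) = 0 := by omega
    have := Submodule.finrank_sup_add_finrank_inf_eq U V
    have hle : finrank ℝ (U ⊔ V : Submodule ℝ E) ≤ n := by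
      simpa [finrank_euclideanSpace] using Submodule.finrank_le (U ⊔ V)
    have hk := k.isLt
    omega
  have hne : (U ⊓ V : Submodule ℝ E) ≠ ⊥ := by
    intro h
    rw [h] at hdim
    simp at hdim
  obtain ⟨x, hxUV, hx0⟩ := Submodule.exists_mem_ne_zero_of_ne_bot hne
  have hxU : x ∈ U := hxUV.1
  have hxV : x ∈ V := hxUV.2
  have hnorm : (0:ℝ) < ‖x‖ ^ 2 := pow_pos (norm_pos_iff.mpr hx0) 2
  -- lower bound
  have h1 : μ k * ‖x‖ ^ 2 ≤ ⟪x, T₁ x⟫ := by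
    rw [inner_map_eq b T₁ μ hb x, ← sum_inner_sq b x, Finset.mul_sum]
    refine Finset.sum_le_sum fun j _ => ?_
    by_cases hj : j ∈ (↑(Finset.Ici k) : Set (Fin n))
    · exact mul_le_mul_of_nonneg_right (hμ (by simpa using hj)) (sq_nonneg _)
    · rw [inner_eq_zero_of_mem_span b hxU hj]
      simp
  have h2 : ⟪x, T₂ x⟫ ≤ ν k * ‖x‖ ^ 2 := by
    rw [inner_map_eq c T₂ ν hc x, ← sum_inner_sq c x, Finset.mul_sum]
    refine Finset.sum_le_sum fun j _ => ?_
    by_cases hj : j ∈ (↑(Finset.Iic k) : Set (Fin n))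
    · exact mul_le_mul_of_nonneg_right (hν (by simpa using hj)) (sq_nonneg _)
    · rw [inner_eq_zero_of_mem_span c hxV hj]
      simp
  have h3 : ⟪x, T₁ x⟫ - ⟪x, T₂ x⟫ ≤ C * ‖x‖ ^ 2 := by
    rw [← inner_sub_right]; exact hC x
  have : μ k * ‖x‖ ^ 2 ≤ (ν k + C) * ‖x‖ ^ 2 := by nlinarith
  exact le_of_mul_le_mul_right (by linarith [this]) hnorm


private lemma toEuclideanLin_eigen {A : Matrix (Fin n) (Fin n) ℝ} (hA : A.IsHermitian)
    (j : Fin n) :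
    Matrix.toEuclideanLin A (hA.eigenvectorBasis j) =
      hA.eigenvalues j • hA.eigenvectorBasis j := by
  have h := hA.mulVec_eigenvectorBasis j
  apply (WithLp.equiv 2 (Fin n → ℝ)).injective
  simpa using h

private lemma frob_bound (M : Matrix (Fin n) (Fin n) ℝ) (x : E) :
    ⟪x, Matrix.toEuclideanLin M x⟫ ≤ Real.sqrt (∑ i, ∑ j, (M i j) ^ 2) * ‖x‖ ^ 2 := by
  set F := Real.sqrt (∑ i, ∑ j, (M i j) ^ 2) with hF
  have hF0 : 0 ≤ F := Real.sqrt_nonneg _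
  have hx2 : ‖x‖ ^ 2 = ∑ j, (x j) ^ 2 := by
    rw [PiLp.norm_sq_eq_of_L2]
    exact Finset.sum_congr rfl fun j _ => by rw [Real.norm_eq_abs, sq_abs]
  have hy2 : ‖Matrix.toEuclideanLin M x‖ ^ 2 ≤ (∑ i, ∑ j, (M i j) ^ 2) * ‖x‖ ^ 2 := by
    rw [PiLp.norm_sq_eq_of_L2, hx2, Finset.sum_mul]
    refine Finset.sum_le_sum fun i _ => ?_
    have : Matrix.toEuclideanLin M x i = ∑ j, M i j * x j := rfl
    rw [this, Real.norm_eq_abs, sq_abs]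
    exact sum_mul_sq_le_sq_mul_sq _ _ _
  have hy : ‖Matrix.toEuclideanLin M x‖ ≤ F * ‖x‖ := by
    have h1 : ‖Matrix.toEuclideanLin M x‖ ^ 2 ≤ (F * ‖x‖) ^ 2 := by
      rw [mul_pow, hF, Real.sq_sqrt (by positivity)]
      exact hy2
    calc ‖Matrix.toEuclideanLin M x‖
        = Real.sqrt (‖Matrix.toEuclideanLin M x‖ ^ 2) := (Real.sqrt_sq (norm_nonneg _)).symm
      _ ≤ Real.sqrt ((F * ‖x‖) ^ 2) := Real.sqrt_le_sqrt h1
      _ = F * ‖x‖ := Real.sqrt_sq (by positivity)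
  calc ⟪x, Matrix.toEuclideanLin M x⟫ ≤ ‖x‖ * ‖Matrix.toEuclideanLin M x‖ :=
        real_inner_le_norm _ _
    _ ≤ ‖x‖ * (F * ‖x‖) := by
        exact mul_le_mul_of_nonneg_left hy (norm_nonneg _)
    _ = F * ‖x‖ ^ 2 := by ring

/-- Sorted eigenvalues of a hermitian matrix. -/
private def sorted (A : {A : Matrix (Fin n) (Fin n) ℝ // A.IsHermitian}) : Fin n → ℝ :=
  fun i => A.2.eigenvalues (Tuple.sort A.2.eigenvalues i)

private lemma sorted_weyl (A B : {A : Matrix (Fin n) (Fin n) ℝ // A.IsHermitian}) (k : Fin n) :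
    sorted A k ≤ sorted B k + Real.sqrt (∑ i, ∑ j, (A.1 i j - B.1 i j) ^ 2) := by
  set σ := Tuple.sort A.2.eigenvalues
  set τ := Tuple.sort B.2.eigenvalues
  refine weyl (Matrix.toEuclideanLin A.1) (Matrix.toEuclideanLin B.1)
    (A.2.eigenvectorBasis.reindex σ.symm) (B.2.eigenvectorBasis.reindex τ.symm)
    (sorted A) (sorted B) (Tuple.monotone_sort _) (Tuple.monotone_sort _)
    (fun j => ?_) (fun j => ?_) _ (fun x => ?_) k
  · rw [OrthonormalBasis.reindex_apply, Equiv.symm_symm]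
    exact toEuclideanLin_eigen A.2 (σ j)
  · rw [OrthonormalBasis.reindex_apply, Equiv.symm_symm]
    exact toEuclideanLin_eigen B.2 (τ j)
  · have h : Matrix.toEuclideanLin A.1 x - Matrix.toEuclideanLin B.1 x =
        Matrix.toEuclideanLin (A.1 - B.1) x := by
      rw [map_sub]; rfl
    rw [h]
    exact frob_bound _ x


private lemma sorted_abs_le (A B : {A : Matrix (Fin n) (Fin n) ℝ // A.IsHermitian}) (k : Fin n) :
    |sorted A k - sorted B k| ≤ Real.sqrt (∑ i, ∑ j, (A.1 i j - B.1 i j) ^ 2) := by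
  have hsym : Real.sqrt (∑ i, ∑ j, (B.1 i j - A.1 i j) ^ 2) =
      Real.sqrt (∑ i, ∑ j, (A.1 i j - B.1 i j) ^ 2) := by
    congr 1
    exact Finset.sum_congr rfl fun i _ => Finset.sum_congr rfl fun j _ => by ring
  have h1 := sorted_weyl A B k
  have h2 := sorted_weyl B A k
  rw [hsym] at h2
  rw [abs_sub_le_iff]
  constructor <;> linarith

/-- Sorted eigenvalues as an element of Euclidean space. -/
private def sortedE (A : {A : Matrix (Fin n) (Fin n) ℝ // A.IsHermitian}) :
    EuclideanSpace ℝ (Fin n) :=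
  WithLp.toLp 2 (sorted A)

end EigLip

/-- The map sending a real symmetric (hermitian) `n × n` matrix to the vector of its
eigenvalues listed in increasing order is globally Lipschitz with respect to the
Frobenius norm on matrices and the Euclidean norm on `ℝⁿ`. -/
theorem eigenvalue_map_lipschitz (n : ℕ) :
    ∃ (Λ : {A : Matrix (Fin n) (Fin n) ℝ // A.IsHermitian} → EuclideanSpace ℝ (Fin n))
      (K : ℝ), 0 ≤ K ∧
      (∀ A, Monotone (Λ A)) ∧
      (∀ A, ∃ σ : Equiv.Perm (Fin n), ∀ i, Λ A i = A.2.eigenvalues (σ i)) ∧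
      (∀ A B, ‖Λ A - Λ B‖ ≤
        K * Real.sqrt (∑ i, ∑ j, (A.1 i j - B.1 i j) ^ 2)) := by
  refine ⟨fun A => sortedE A, Real.sqrt n, Real.sqrt_nonneg _, ?_, ?_, ?_⟩
  · intro A i j hij
    exact Tuple.monotone_sort A.2.eigenvalues hij
  · intro A
    exact ⟨Tuple.sort A.2.eigenvalues, fun i => rfl⟩
  · intro A B
    set F := Real.sqrt (∑ i, ∑ j, (A.1 i j - B.1 i j) ^ 2) with hF
    have hF0 : 0 ≤ F := Real.sqrt_nonneg _
    have key : ∀ k, |sorted A k - sorted B k| ≤ F := sorted_abs_le A B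
    have hnorm : ‖sortedE A - sortedE B‖ =
        Real.sqrt (∑ k, (sorted A k - sorted B k) ^ 2) := by
      rw [EuclideanSpace.norm_eq]
      congr 1
      exact Finset.sum_congr rfl fun k _ => by
        rw [show (sortedE A - sortedE B) k = sorted A k - sorted B k from rfl,
          Real.norm_eq_abs, sq_abs]
    show ‖sortedE A - sortedE B‖ ≤ Real.sqrt n * F
    rw [hnorm]
    have hsum : ∑ k, (sorted A k - sorted B k) ^ 2 ≤ (n : ℝ) * F ^ 2 := by
      calc ∑ k, (sorted A k - sorted B k) ^ 2 ≤ ∑ _k : Fin n, F ^ 2 := by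
            refine Finset.sum_le_sum fun k _ => ?_
            have := key k
            have h' : (sorted A k - sorted B k) ^ 2 ≤ |sorted A k - sorted B k| ^ 2 := by
              rw [sq_abs]
            calc (sorted A k - sorted B k) ^ 2 = |sorted A k - sorted B k| ^ 2 := by rw [sq_abs]
              _ ≤ F ^ 2 := pow_le_pow_left₀ (abs_nonneg _) (key k) 2
        _ = (n : ℝ) * F ^ 2 := by
            rw [Finset.sum_const, Finset.card_univ, Fintype.card_fin, nsmul_eq_mul]
    calc Real.sqrt (∑ k, (sorted A k - sorted B k) ^ 2) ≤ Real.sqrt ((n : ℝ) * F ^ 2) :=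
          Real.sqrt_le_sqrt hsum
      _ = Real.sqrt n * F := by
          rw [Real.sqrt_mul (Nat.cast_nonneg n), Real.sqrt_sq hF0]
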